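/- Let S be a finite type, f : S → Bool → S, s₀ ∈ S and F ⊆ S, with every state of S reachable from s₀, and let C = {X : ℕ → Bool | r n ∈ F for some n}, where r is the run of X. If μ(C) < 1, then C is not dense: there exists a word u such that every sequence X having u as a prefix satisfies r n ∉ F for all n. -/

import Mathlib

open MeasureTheory Filter

/-- The fair-coin product probability measure on Cantor space `ℕ → Bool`,
constructed as the pushforward of Lebesgue measure on `[0,1)` under binary expansion. -/
noncomputable def mu : Measure (ℕ → Bool) :=
  Measure.map (fun x n => decide (⌊x * 2 ^ (n + 1)⌋ % 2 = 1))
    (volume.restrict (Set.Ico (0 : ℝ) 1))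

/-- Action of a word on a state of an automaton. -/
def act {S A : Type*} (f : S → A → S) (s : S) (w : List A) : S := w.foldl f s

/-- The run of a sequence `X` on the machine `(S, f, s₀)`. -/
def run {S : Type*} (f : S → Bool → S) (s₀ : S) (X : ℕ → Bool) : ℕ → S
  | 0 => s₀
  | n + 1 => f (run f s₀ X n) (X n)

/-- `t` is reachable from `s`. -/
def Reach {S : Type*} (f : S → Bool → S) (s t : S) : Prop := ∃ w : List Bool, act f s w = t

/-- The connected component of a state `s`. -/
def component {S : Type*} (f : S → Bool → S) (s : S) : Set S :=
  {t | Reach f s t ∧ Reach f t s}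

/-- `g` is a leaf connected component. -/
def IsLeafComponent {S : Type*} (f : S → Bool → S) (g : Set S) : Prop :=
  (∃ s, g = component f s) ∧ ∀ s ∈ g, ∀ t, Reach f s t → Reach f t s

/-- The word `w` occurs as a subword of the sequence `X`. -/
def Occurs (w : List Bool) (X : ℕ → Bool) : Prop :=
  ∃ n, ∀ k < w.length, X (n + k) = w.getD k false

/-- `X` is disjunctive: every word occurs in `X` as a subword. -/
def Disjunctive (X : ℕ → Bool) : Prop := ∀ w : List Bool, Occurs w X

/-- The word `w` is a prefix of the sequence `X`. -/
def IsPrefixOfSeq (w : List Bool) (X : ℕ → Bool) : Prop :=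
  ∀ k < w.length, X k = w.getD k false

/-- `[L]`: the set of sequences having some prefix in the language `L`. -/
def cyl (L : Set (List Bool)) : Set (ℕ → Bool) := {X | ∃ w ∈ L, IsPrefixOfSeq w X}

/-- `I(X)`: the set of states visited infinitely often by the run of `X`. -/
def InfOcc {S : Type*} (f : S → Bool → S) (s₀ : S) (X : ℕ → Bool) : Set S :=
  {s | ∃ᶠ n in atTop, run f s₀ X n = s}

/-- `X` is accepted by the deterministic Büchi automaton `(S, f, s₀, F)`. -/
def BuchiAccepts {S : Type*} (f : S → Bool → S) (s₀ : S) (F : Set S) (X : ℕ → Bool) : Prop :=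
  ∃ᶠ n in atTop, run f s₀ X n ∈ F

/-- A language is regular if it is accepted by a DFA with finitely many states. -/
def Regular {A : Type} (L : Set (List A)) : Prop :=
  ∃ (S : Type) (_ : Fintype S) (f : S → A → S) (s₀ : S) (F : Set S),
    L = {w | act f s₀ w ∈ F}

/-- The convolution of two words. -/
def conv (x i : List Bool) : List (Option Bool × Option Bool) :=
  (List.range (max x.length i.length)).map (fun k => (x[k]?, i[k]?))

/-- `(I, U)` is an automatic family. -/
def IsAutomaticFamily (I : Set (List Bool)) (U : List Bool → Set (List Bool)) : Prop :=
  Regular I ∧ Regular {c | ∃ i ∈ I, ∃ x ∈ U i, c = conv x i}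

/-- `(I, U)` is an automatic randomness test (ART). -/
def IsART (I : Set (List Bool)) (U : List Bool → Set (List Bool)) : Prop :=
  IsAutomaticFamily I U ∧ ∀ ε : ENNReal, 0 < ε → ∃ i ∈ I, mu (cyl (U i)) ≤ ε

/-- `(I, U)` is a Martin-Löf automatic randomness test (MART). -/
def IsMART (I : Set (List Bool)) (U : List Bool → Set (List Bool)) : Prop :=
  IsAutomaticFamily I U ∧ I.Infinite ∧
    ∀ i ∈ I, mu (cyl (U i)) ≤ (2 : ENNReal) ^ (-(i.length : ℤ))

/-- The covering region `F(I, U)` of a test. -/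
def coverRegion (I : Set (List Bool)) (U : List Bool → Set (List Bool)) : Set (ℕ → Bool) :=
  ⋂ i ∈ I, cyl (U i)

namespace Stmt19Aux

noncomputable def phi : ℝ → ℕ → Bool := fun x n => decide (⌊x * 2 ^ (n + 1)⌋ % 2 = 1)

lemma measurable_phi : Measurable phi := by
  apply measurable_pi_lambda
  intro n
  exact (measurable_of_countable (fun z : ℤ => decide (z % 2 = 1))).comp
    (Int.measurable_floor.comp (measurable_id.mul_const _))

lemma mu_apply {A : Set (ℕ → Bool)} (hA : MeasurableSet A) :
    mu A = volume (phi ⁻¹' A ∩ Set.Ico (0:ℝ) 1) := by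
  rw [show mu = Measure.map phi (volume.restrict (Set.Ico (0:ℝ) 1)) from rfl,
    Measure.map_apply measurable_phi hA, Measure.restrict_apply (measurable_phi hA)]

lemma mu_univ : mu Set.univ = 1 := by
  rw [mu_apply MeasurableSet.univ, Set.preimage_univ, Set.univ_inter, Real.volume_Ico]
  norm_num

lemma floor_succ (x : ℝ) (k : ℕ) :
    ⌊x * 2 ^ (k + 1)⌋ = 2 * ⌊x * 2 ^ k⌋ + ⌊x * 2 ^ (k + 1)⌋ % 2 := by
  have h1 : (2 * ⌊x * 2 ^ k⌋ : ℤ) ≤ ⌊x * 2 ^ (k + 1)⌋ := by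
    rw [Int.le_floor]
    have := Int.floor_le (x * 2 ^ k)
    push_cast
    rw [pow_succ]
    nlinarith
  have h2 : ⌊x * 2 ^ (k + 1)⌋ < 2 * ⌊x * 2 ^ k⌋ + 2 := by
    rw [Int.floor_lt]
    have := Int.lt_floor_add_one (x * 2 ^ k)
    push_cast
    rw [pow_succ]
    nlinarith
  omega

lemma floor_eq_of_digits {x y : ℝ} (hx : x ∈ Set.Ico (0:ℝ) 1) (hy : y ∈ Set.Ico (0:ℝ) 1)
    (n : ℕ) (hd : ∀ k < n, phi x k = phi y k) : ⌊x * 2 ^ n⌋ = ⌊y * 2 ^ n⌋ := by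
  induction n with
  | zero =>
    simp only [pow_zero, mul_one]
    rw [Int.floor_eq_zero_iff.2 hx, Int.floor_eq_zero_iff.2 hy]
  | succ k ih =>
    have hk := hd k (Nat.lt_succ_self k)
    simp only [phi, decide_eq_decide] at hk
    have hx' := floor_succ x k
    have hy' := floor_succ y k
    have := ih (fun j hj => hd j (hj.trans (Nat.lt_succ_self k)))
    omega

lemma mu_cyl_le (n : ℕ) (g : ℕ → Bool) :
    mu {X : ℕ → Bool | ∀ k < n, X k = g k} ≤ 2⁻¹ ^ n := by
  have hA : MeasurableSet {X : ℕ → Bool | ∀ k < n, X k = g k} := by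
    have : {X : ℕ → Bool | ∀ k < n, X k = g k}
        = ⋂ k ∈ Set.Iio n, (fun X : ℕ → Bool => X k) ⁻¹' {g k} := by
      ext X; simp [Set.mem_iInter]
    rw [this]
    exact MeasurableSet.biInter (Set.to_countable _)
      (fun k _ => measurable_pi_apply k (measurableSet_singleton (g k)))
  rw [mu_apply hA]
  set T := phi ⁻¹' {X : ℕ → Bool | ∀ k < n, X k = g k} ∩ Set.Ico (0:ℝ) 1 with hT
  rcases Set.eq_empty_or_nonempty T with he | ⟨x₀, hx₀⟩
  · rw [he]; simp
  · set a : ℤ := ⌊x₀ * 2 ^ n⌋ with ha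
    have hsub : T ⊆ Set.Ico ((a:ℝ) / 2 ^ n) ((a + 1 : ℝ) / 2 ^ n) := by
      rintro x ⟨hxA, hxI⟩
      have hfl : ⌊x * 2 ^ n⌋ = a :=
        floor_eq_of_digits hxI hx₀.2 n (fun k hk => by
          rw [hxA k hk, hx₀.1 k hk])
      have h2 : (0:ℝ) < 2 ^ n := by positivity
      constructor
      · rw [div_le_iff₀ h2]
        have := Int.floor_le (x * 2 ^ n); rw [hfl] at this; linarith
      · rw [lt_div_iff₀ h2]
        have := Int.lt_floor_add_one (x * 2 ^ n); rw [hfl] at this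
        push_cast at this ⊢; linarith
    calc volume T ≤ volume (Set.Ico ((a:ℝ) / 2 ^ n) ((a + 1 : ℝ) / 2 ^ n)) :=
          measure_mono hsub
      _ = ENNReal.ofReal ((a + 1 : ℝ) / 2 ^ n - (a:ℝ) / 2 ^ n) := Real.volume_Ico
      _ = 2⁻¹ ^ n := by
          rw [div_sub_div_same]
          have h1 : ((a:ℝ) + 1 - a) / 2 ^ n = (2⁻¹ : ℝ) ^ n := by
            rw [inv_pow]; ring
          rw [h1, ENNReal.ofReal_pow (by norm_num)]
          congr 1
          rw [ENNReal.ofReal_inv_of_pos (by norm_num)]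
          norm_num

end Stmt19Aux

namespace Stmt19Aux

def pword (X : ℕ → Bool) (n : ℕ) : List Bool := (List.range n).map X

lemma act_append {S : Type*} (f : S → Bool → S) (s : S) (u v : List Bool) :
    act f s (u ++ v) = act f (act f s u) v := List.foldl_append ..

lemma run_eq_act {S : Type*} (f : S → Bool → S) (s₀ : S) (X : ℕ → Bool) (n : ℕ) :
    run f s₀ X n = act f s₀ (pword X n) := by
  induction n with
  | zero => rfl
  | succ n ih =>
    have : pword X (n + 1) = pword X n ++ [X n] := by
      simp [pword, List.range_succ]
    rw [run, this, act_append, ih]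
    rfl

lemma pword_add (X : ℕ → Bool) (a b : ℕ) :
    pword X (a + b) = pword X a ++ (List.range b).map (fun i => X (a + i)) := by
  simp [pword, List.range_add, Function.comp]

lemma pword_prefix {X : ℕ → Bool} {n : ℕ} {p : List Bool} (hp : p <+: pword X n) :
    p = pword X p.length ∧ p.length ≤ n := by
  have hlen : p.length ≤ n := by simpa [pword] using hp.length_le
  refine ⟨?_, hlen⟩
  conv_lhs => rw [List.prefix_iff_eq_take.mp hp]
  unfold pword
  rw [← List.map_take, List.take_range, min_eq_left hlen]

lemma pword_of_prefixSeq {u : List Bool} {X : ℕ → Bool} (h : IsPrefixOfSeq u X) :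
    pword X u.length = u := by
  apply List.ext_getElem (by simp [pword])
  intro i h1 h2
  simp only [pword, List.getElem_map, List.getElem_range]
  rw [h i h2]
  exact List.getD_eq_getElem _ _ h2

end Stmt19Aux

open Stmt19Aux

/-- If the class of sequences whose run ever visits an accepting state
does not have full measure, then it is not dense: some word `u` cannot be extended to
a sequence in it. -/
theorem stmt19 {S : Type} [Fintype S] (f : S → Bool → S) (s₀ : S) (F : Set S)
    (hreach : ∀ s : S, Reach f s₀ s)
    (h : mu {X : ℕ → Bool | ∃ n : ℕ, run f s₀ X n ∈ F} < 1) :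
    ∃ u : List Bool, ∀ X : ℕ → Bool, IsPrefixOfSeq u X → ∀ n : ℕ, run f s₀ X n ∉ F := by
  classical
  by_contra hcon
  push_neg at hcon
  set C := {X : ℕ → Bool | ∃ n : ℕ, run f s₀ X n ∈ F} with hCdef
  have hs₀ : s₀ ∉ F := by
    intro hs₀F
    have hCuniv : C = Set.univ := by
      ext X
      simp only [Set.mem_univ, iff_true, hCdef, Set.mem_setOf_eq]
      exact ⟨0, hs₀F⟩
    rw [hCuniv, mu_univ] at h
    exact lt_irrefl _ h
  set D : Set S := {s | ∃ u : List Bool, act f s₀ u = s ∧ ∀ p, p <+: u → act f s₀ p ∉ F}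
    with hDdef
  have hs₀D : s₀ ∈ D := by
    refine ⟨[], rfl, fun p hp => ?_⟩
    rw [List.prefix_nil.mp hp]
    exact hs₀
  have hclose : ∀ s ∈ D, ∀ q : List Bool, (∀ p, p <+: q → act f s p ∉ F) → act f s q ∈ D := by
    rintro s ⟨u, hu1, hu2⟩ q hq
    refine ⟨u ++ q, by rw [act_append, hu1], fun p hp => ?_⟩
    by_cases hle : p.length ≤ u.length
    · exact hu2 p (List.prefix_of_prefix_length_le hp (List.prefix_append u q) hle)
    · have hup : u <+: p :=
        List.prefix_of_prefix_length_le (List.prefix_append u q) hp (le_of_not_ge hle)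
      obtain ⟨r, hr⟩ := hup
      have hrq : r <+: q := by
        obtain ⟨t, ht⟩ := hp
        rw [← hr, List.append_assoc] at ht
        exact ⟨t, (List.append_cancel_left ht)⟩
      rw [← hr, act_append, hu1]
      exact hq r hrq
  have hstep : ∀ s ∈ D, ∃ v : List Bool, act f s v ∈ F := by
    rintro s ⟨u, hu1, hu2⟩
    obtain ⟨X, hpre, n, hn⟩ := hcon u
    have hXu : pword X u.length = u := pword_of_prefixSeq hpre
    by_cases hle : n ≤ u.length
    · exfalso
      have hppre : pword X n <+: u := by
        rw [← hXu, show u.length = n + (u.length - n) from (Nat.add_sub_cancel' hle).symm,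
          pword_add]
        exact List.prefix_append _ _
      exact hu2 _ hppre (by rw [← run_eq_act]; exact hn)
    · push_neg at hle
      refine ⟨(List.range (n - u.length)).map (fun i => X (u.length + i)), ?_⟩
      have hsplit : pword X n
          = u ++ (List.range (n - u.length)).map (fun i => X (u.length + i)) := by
        conv_lhs => rw [show n = u.length + (n - u.length) from (Nat.add_sub_cancel' hle.le).symm]
        rw [pword_add, hXu]
      rw [← hu1, ← act_append, ← hsplit, ← run_eq_act]
      exact hn
  have hmain : ∀ T : Finset S, (∀ s ∈ T, s ∈ D) →
      ∃ w : List Bool, ∀ s ∈ T, ∃ p, p <+: w ∧ act f s p ∈ F := by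
    intro T
    induction T using Finset.induction_on with
    | empty => exact fun _ => ⟨[], by simp⟩
    | @insert s T hsT ih =>
      intro hTD
      obtain ⟨w, hw⟩ := ih (fun t ht => hTD t (Finset.mem_insert_of_mem ht))
      by_cases hhit : ∃ p, p <+: w ∧ act f s p ∈ F
      · refine ⟨w, fun t ht => ?_⟩
        rcases Finset.mem_insert.mp ht with rfl | ht'
        · exact hhit
        · exact hw t ht'
      · push_neg at hhit
        have hsD : s ∈ D := hTD s (Finset.mem_insert_self s T)
        have hwD : act f s w ∈ D := hclose s hsD w hhit
        obtain ⟨v, hv⟩ := hstep _ hwD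
        refine ⟨w ++ v, fun t ht => ?_⟩
        rcases Finset.mem_insert.mp ht with rfl | ht'
        · exact ⟨w ++ v, List.prefix_rfl, by rw [act_append]; exact hv⟩
        · obtain ⟨p, hp1, hp2⟩ := hw t ht'
          exact ⟨p, hp1.trans (List.prefix_append w v), hp2⟩
  obtain ⟨w, hw0⟩ := hmain (Finset.univ.filter (fun s => s ∈ D))
    (fun s hs => (Finset.mem_filter.mp hs).2)
  have hw' : ∀ s ∈ D, ∃ p, p <+: w ∧ act f s p ∈ F := fun s hs =>
    hw0 s (Finset.mem_filter.mpr ⟨Finset.mem_univ s, hs⟩)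
  set L := w.length with hLdef
  have hL : 0 < L := by
    rcases Nat.eq_zero_or_pos L with h' | h'
    · exfalso
      obtain ⟨p, hp, hpF⟩ := hw' s₀ hs₀D
      have hwnil : w = [] := List.length_eq_zero_iff.mp h'
      rw [hwnil] at hp
      rw [List.prefix_nil.mp hp] at hpF
      exact hs₀ hpF
    · exact h'
  have hDrun : ∀ X, X ∉ C → ∀ n, run f s₀ X n ∈ D := by
    intro X hX n
    refine ⟨pword X n, (run_eq_act f s₀ X n).symm, fun p hp => ?_⟩
    obtain ⟨hpw, hle⟩ := pword_prefix hp
    rw [hpw, ← run_eq_act]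
    intro hF
    exact hX ⟨p.length, hF⟩
  have hblock : ∀ X, X ∉ C → ∀ j : ℕ, ∃ i, i < L ∧ X (j * L + i) ≠ w.getD i false := by
    intro X hX j
    by_contra hb
    push_neg at hb
    obtain ⟨p, hp, hpF⟩ := hw' _ (hDrun X hX (j * L))
    have hplen : p.length ≤ L := hp.length_le
    have hseg : (List.range p.length).map (fun i => X (j * L + i)) = p := by
      apply List.ext_getElem (by simp)
      intro i h1 h2
      simp only [List.getElem_map, List.getElem_range]
      have hiw : i < L := lt_of_lt_of_le h2 hplen
      rw [hb i hiw, List.getD_eq_getElem _ _ hiw]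
      exact (hp.getElem h2).symm
    have hrun : run f s₀ X (j * L + p.length) ∈ F := by
      rw [run_eq_act, pword_add, act_append, hseg, ← run_eq_act]
      exact hpF
    exact hX ⟨j * L + p.length, hrun⟩
  set q : ENNReal := ((2 ^ L - 1 : ℕ) : ENNReal) * 2⁻¹ ^ L with hqdef
  have hcount : ∀ m : ℕ, mu Cᶜ ≤ q ^ m := by
    intro m
    set G : (Fin m → {g : Fin L → Bool // g ≠ fun i : Fin L => w.getD i false}) → ℕ → Bool :=
      fun v k => if hk : k / L < m then (v ⟨k / L, hk⟩).1 ⟨k % L, Nat.mod_lt _ hL⟩ else false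
      with hGdef
    have hsub : Cᶜ ⊆ ⋃ v, {X : ℕ → Bool | ∀ k < m * L, X k = G v k} := by
      intro X hX
      have hvne : ∀ j : Fin m, (fun i : Fin L => X (j * L + i)) ≠ fun i : Fin L => w.getD i false := by
        intro j heq
        obtain ⟨i, hi, hne⟩ := hblock X hX j
        exact hne (by simpa using congrFun heq ⟨i, hi⟩)
      refine Set.mem_iUnion.mpr ⟨fun j => ⟨fun i => X (j * L + i), hvne j⟩, ?_⟩
      intro k hk
      have hjk : k / L < m := (Nat.div_lt_iff_lt_mul hL).mpr hk
      simp only [hGdef, hjk, dif_pos]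
      congr 1
      have h1 := Nat.div_add_mod k L
      have h2 : k / L * L = L * (k / L) := Nat.mul_comm _ _
      omega
    have hcard : Fintype.card {g : Fin L → Bool // g ≠ fun i : Fin L => w.getD i false} = 2 ^ L - 1 := by
      have h1 : Fintype.card {g : Fin L → Bool // g = fun i : Fin L => w.getD i false} = 1 :=
        Fintype.card_subtype_eq _
      have h2 := Fintype.card_subtype_compl (fun g : Fin L → Bool => g = fun i : Fin L => w.getD i false)
      rw [h1] at h2
      simpa [Fintype.card_fun] using h2
    calc mu Cᶜ ≤ ∑' v, mu {X : ℕ → Bool | ∀ k < m * L, X k = G v k} :=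
          (measure_mono hsub).trans (measure_iUnion_le _)
      _ ≤ ∑' _v : (Fin m → {g : Fin L → Bool // g ≠ fun i : Fin L => w.getD i false}),
            (2⁻¹ : ENNReal) ^ (m * L) :=
          ENNReal.tsum_le_tsum fun v => mu_cyl_le (m * L) (G v)
      _ = (Fintype.card (Fin m → {g : Fin L → Bool // g ≠ fun i : Fin L => w.getD i false}) : ENNReal)
            * 2⁻¹ ^ (m * L) := by
          rw [tsum_fintype]
          simp [Finset.sum_const, Finset.card_univ, nsmul_eq_mul]
      _ = q ^ m := by
          rw [Fintype.card_fun, hcard, hqdef, mul_pow, Fintype.card_fin,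
            show m * L = L * m from Nat.mul_comm m L, pow_mul]
          push_cast
          rfl

  have hq1 : q < 1 := by
    rw [hqdef, ← ENNReal.inv_pow, ← div_eq_mul_inv,
      ENNReal.div_lt_iff (Or.inl (pow_ne_zero L (by norm_num)))
        (Or.inl (ENNReal.pow_ne_top (by norm_num))), one_mul]
    norm_cast
    exact Nat.sub_lt (by positivity) one_pos
  have h0 : Tendsto (fun m => q ^ m) atTop (nhds 0) :=
    ENNReal.tendsto_pow_atTop_nhds_zero_of_lt_one hq1
  have hC0 : mu Cᶜ ≤ 0 := ge_of_tendsto' h0 hcount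
  have h1 : (1 : ENNReal) ≤ mu C := by
    have hu := measure_union_le (μ := mu) C Cᶜ
    rw [Set.union_compl_self, mu_univ] at hu
    calc (1 : ENNReal) ≤ mu C + mu Cᶜ := hu
      _ ≤ mu C + 0 := add_le_add le_rfl hC0
      _ = mu C := add_zero _
  exact absurd h (not_lt.mpr h1)
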